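/- Let X be a finite graph and let s₁^{e₁} ⋯ s_n^{e_n} be a fully reduced word in A_X. Then the element s₁ s₂ ⋯ s_n of the right-angled Artin monoid M_X is square-free, i.e. it cannot be written as a word in the vertex generators of M_X in which two consecutive letters are equal. -/

import Mathlib

/-- Defining relators of the right-angled Artin group of a graph. -/
def raagRels {V : Type*} (X : SimpleGraph V) : Set (FreeGroup V) :=
  {r | ∃ x y : V, X.Adj x y ∧
    r = FreeGroup.of x * FreeGroup.of y * (FreeGroup.of x)⁻¹ * (FreeGroup.of y)⁻¹}

/-- The right-angled Artin group of a graph. -/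
def RAAG {V : Type*} (X : SimpleGraph V) : Type _ := PresentedGroup (raagRels X)

instance {V : Type*} (X : SimpleGraph V) : Group (RAAG X) := by
  unfold RAAG; infer_instance

/-- The generator of the RAAG corresponding to a vertex. -/
def RAAG.of {V : Type*} (X : SimpleGraph V) (v : V) : RAAG X := PresentedGroup.of v
/-- The congruence on the free monoid defining the right-angled Artin monoid. -/
def raamCon {V : Type*} (X : SimpleGraph V) : Con (FreeMonoid V) :=
  conGen (fun a b => ∃ x y : V, X.Adj x y ∧
    a = FreeMonoid.of x * FreeMonoid.of y ∧ b = FreeMonoid.of y * FreeMonoid.of x)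

/-- The right-angled Artin monoid of a graph. -/
def RAAM {V : Type*} (X : SimpleGraph V) : Type _ := (raamCon X).Quotient

instance {V : Type*} (X : SimpleGraph V) : Monoid (RAAM X) := by
  unfold RAAM; infer_instance

/-- The generator of the RAAM corresponding to a vertex. -/
def RAAM.of {V : Type*} (X : SimpleGraph V) (v : V) : RAAM X :=
  (raamCon X).mk' (FreeMonoid.of v)

/-- The image in `RAAM X` of a word in the vertices. -/
def RAAM.mk {V : Type*} (X : SimpleGraph V) (l : List V) : RAAM X :=
  (raamCon X).mk' (FreeMonoid.ofList l)

/-- A fully reduced word datum `s₁^{e₁} ⋯ s_n^{e_n}` in the RAAG. -/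
def FullyReduced {V : Type*} (X : SimpleGraph V) {n : ℕ} (s : Fin n → V) (e : Fin n → ℤ) : Prop :=
  (∀ i, e i ≠ 0) ∧ ∀ i j : Fin n, i < j → s i = s j →
    ∃ k : Fin n, i < k ∧ k < j ∧
      RAAG.of X (s k) * RAAG.of X (s i) ≠ RAAG.of X (s i) * RAAG.of X (s k)

section Aux

variable {V : Type*}

/-- Filtering a word, as a monoid hom on the free monoid. -/
def filterHom (p : V → Bool) : FreeMonoid V →* FreeMonoid V where
  toFun l := FreeMonoid.ofList ((FreeMonoid.toList l).filter p)
  map_one' := rfl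
  map_mul' a b := by
    simp [FreeMonoid.toList_mul, List.filter_append, FreeMonoid.ofList_append]

lemma raag_adj_comm {X : SimpleGraph V} {x y : V} (hxy : X.Adj x y) :
    RAAG.of X x * RAAG.of X y = RAAG.of X y * RAAG.of X x := by
  have h1 : (PresentedGroup.mk (raagRels X))
      (FreeGroup.of x * FreeGroup.of y * (FreeGroup.of x)⁻¹ * (FreeGroup.of y)⁻¹) = 1 := by
    apply (QuotientGroup.eq_one_iff _).mpr
    exact Subgroup.subset_normalClosure ⟨x, y, hxy, rfl⟩
  simp only [map_mul, map_inv] at h1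
  have h2 : RAAG.of X x * RAAG.of X y * (RAAG.of X x)⁻¹ * (RAAG.of X y)⁻¹ = 1 := h1
  exact commutatorElement_eq_one_iff_mul_comm.mp (by rw [commutatorElement_def]; exact h2)

lemma raamCon_filter {X : SimpleGraph V} (p : V → Bool)
    (hp : ∀ x y : V, X.Adj x y → ¬(p x = true ∧ p y = true)) {a b : FreeMonoid V}
    (hab : raamCon X a b) :
    (FreeMonoid.toList a).filter p = (FreeMonoid.toList b).filter p := by
  have hle : raamCon X ≤ Con.ker (filterHom p) := by
    apply Con.conGen_le.mpr
    rintro _ _ ⟨x, y, hxy, rfl, rfl⟩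
    show filterHom p _ = filterHom p _
    have hnot := hp x y hxy
    show FreeMonoid.ofList ((FreeMonoid.toList _).filter p) = FreeMonoid.ofList ((FreeMonoid.toList _).filter p)
    cases hx : p x <;> cases hy : p y <;>
      simp_all [FreeMonoid.toList_mul, List.filter, FreeMonoid.toList_of]
  have h2 := Con.ker_rel _ |>.mp (Con.le_def.mp hle hab)
  have h3 := congrArg FreeMonoid.toList h2
  exact h3

lemma first_gap_unique {α : Type*} {a : α} {x₁ y₁ x₂ y₂ : List α}
    (h : x₁ ++ a :: x₂ = y₁ ++ a :: y₂) (hx : a ∉ x₁) (hy : a ∉ y₁) : x₁ = y₁ := by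
  induction x₁ generalizing y₁ with
  | nil =>
    cases y₁ with
    | nil => rfl
    | cons c t =>
      simp only [List.nil_append, List.cons_append, List.cons.injEq] at h
      exact absurd (h.1 ▸ List.mem_cons_self) hy
  | cons c t ih =>
    cases y₁ with
    | nil =>
      simp only [List.nil_append, List.cons_append, List.cons.injEq] at h
      exact absurd (h.1 ▸ List.mem_cons_self) hx
    | cons d t' =>
      simp only [List.cons_append, List.cons.injEq] at h
      obtain ⟨rfl, h2⟩ := h
      rw [ih h2 (fun hm => hx (List.mem_cons_of_mem _ hm))
        (fun hm => hy (List.mem_cons_of_mem _ hm))]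

lemma gap_unique {α : Type*} [DecidableEq α] {a : α} {x₀ x₁ x₂ y₀ y₁ y₂ : List α}
    (h : x₀ ++ a :: x₁ ++ a :: x₂ = y₀ ++ a :: y₁ ++ a :: y₂)
    (hc : x₀.count a = y₀.count a) (hx : a ∉ x₁) (hy : a ∉ y₁) : x₁ = y₁ := by
  induction x₀ generalizing y₀ with
  | nil =>
    cases y₀ with
    | nil =>
      simp only [List.nil_append, List.cons_append, List.cons.injEq] at h
      exact first_gap_unique (by simpa using h) hx hy
    | cons c t =>
      simp only [List.nil_append, List.cons_append, List.cons.injEq] at h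
      obtain ⟨rfl, -⟩ := h
      simp [List.count_cons] at hc
  | cons c t ih =>
    cases y₀ with
    | nil =>
      simp only [List.nil_append, List.cons_append, List.cons.injEq] at h
      obtain ⟨rfl, -⟩ := h
      simp [List.count_cons] at hc
    | cons d t' =>
      simp only [List.cons_append, List.cons.injEq] at h
      obtain ⟨rfl, h2⟩ := h
      simp only [List.count_cons] at hc
      exact ih h2 (by omega)

lemma exists_first_split {α : Type*} [DecidableEq α] {a : α} :
    ∀ {z : List α}, 1 ≤ z.count a → ∃ z₀ z', z = z₀ ++ a :: z' ∧ a ∉ z₀ := by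
  intro z
  induction z with
  | nil => simp
  | cons c t ih =>
    intro hc
    by_cases hca : c = a
    · exact ⟨[], t, by simp [hca], by simp⟩
    · have : 1 ≤ t.count a := by
        simpa [List.count_cons, hca] using hc
      obtain ⟨z₀, z', rfl, hz₀⟩ := ih this
      exact ⟨c :: z₀, z', rfl, by simp [hz₀, Ne.symm, hca]⟩

lemma exists_split_count {α : Type*} [DecidableEq α] {a : α} :
    ∀ (r : ℕ) (z : List α), r + 2 ≤ z.count a →
      ∃ z₀ z₁ z₂, z = z₀ ++ a :: z₁ ++ a :: z₂ ∧ z₀.count a = r ∧ a ∉ z₁ := by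
  intro r
  induction r with
  | zero =>
    intro z hz
    obtain ⟨p, q, rfl, hp⟩ := exists_first_split (a := a) (z := z) (by omega)
    have hq : 1 ≤ q.count a := by
      rw [List.count_append, List.count_cons_self, List.count_eq_zero.mpr hp] at hz; omega
    obtain ⟨p', q', rfl, hp'⟩ := exists_first_split hq
    exact ⟨p, p', q', by simp, List.count_eq_zero.mpr hp, hp'⟩
  | succ r ih =>
    intro z hz
    obtain ⟨p, q, rfl, hp⟩ := exists_first_split (a := a) (z := z) (by omega)
    have hq : r + 2 ≤ q.count a := by
      rw [List.count_append, List.count_cons_self, List.count_eq_zero.mpr hp] at hz; omega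
    obtain ⟨z₀, z₁, z₂, rfl, hz₀, hz₁⟩ := ih q hq
    refine ⟨p ++ a :: z₀, z₁, z₂, by simp, ?_, hz₁⟩
    simp [List.count_append, List.count_cons, List.count_eq_zero.mpr hp, hz₀]

end Aux

lemma getElem_idx_congr {α : Type*} {l : List α} {i j : ℕ} (h : i = j) (hi : i < l.length) :
    l[i] = l[j]'(h ▸ hi) := by cases h; rfl

lemma getElem_append_mid {α : Type*} (l₁ l₂ : List α) (x : α) (h : l₁.length < (l₁ ++ x :: l₂).length) :
    (l₁ ++ x :: l₂)[l₁.length]'h = x := by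
  rw [List.getElem_append_right (le_refl _)]
  simp

theorem fullyReduced_squareFree {V : Type*} [Fintype V] (X : SimpleGraph V) {n : ℕ}
    (s : Fin n → V) (e : Fin n → ℤ) (h : FullyReduced X s e) :
    ∀ l : List V, RAAM.mk X l = RAAM.mk X (List.ofFn s) → l.Chain' (· ≠ ·) := by
  classical
  intro l hl
  set w := List.ofFn s with hwdef
  have hl' : ((FreeMonoid.ofList l : FreeMonoid V) : (raamCon X).Quotient)
      = (FreeMonoid.ofList w : FreeMonoid V) := hl
  have hcon : raamCon X (FreeMonoid.ofList l) (FreeMonoid.ofList w) := ((raamCon X).eq).mp hl'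
  have hfilter : ∀ p : V → Bool, (∀ x y : V, X.Adj x y → ¬(p x = true ∧ p y = true)) →
      l.filter p = w.filter p := fun p hp => raamCon_filter p hp hcon
  have hcount : ∀ a : V, l.count a = w.count a := by
    intro a
    have hfa := hfilter (fun x => x == a) (by
      rintro x y hxy ⟨h1, h2⟩
      simp only [beq_iff_eq] at h1 h2
      exact hxy.ne (h1.trans h2.symm))
    rw [List.count_eq_countP, List.count_eq_countP, List.countP_eq_length_filter,
      List.countP_eq_length_filter, hfa]
  refine List.isChain_iff_getElem.mpr ?_
  intro i hi
  by_contra heqc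
  have h0a : i < l.length := by omega
  have hia : i + 1 < l.length := by omega
  set a := l[i]'h0a with ha
  have heq' : l[i+1]'hia = a := by
    simpa [List.get_eq_getElem] using heqc.symm
  have hsplit : l = l.take i ++ a :: a :: l.drop (i+2) := by
    conv_lhs => rw [← List.take_append_drop i l]
    rw [List.drop_eq_getElem_cons h0a, List.drop_eq_getElem_cons hia, heq', ← ha]
  set u := l.take i with hu
  set v := l.drop (i+2) with hv
  set r := u.count a with hr
  have hw2 : r + 2 ≤ w.count a := by
    have h3 : l.count a = r + 2 + v.count a := by
      conv_lhs => rw [hsplit]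
      rw [List.count_append, List.count_cons_self, List.count_cons_self]
      omega
    have h4 := hcount a
    omega
  obtain ⟨z₀, z₁, z₂, hwsplit, hz₀, hz₁⟩ := exists_split_count r w hw2
  have hcommz : ∀ b ∈ z₁, X.Adj a b := by
    intro b hb
    by_contra hnadj
    have hba : b ≠ a := fun hh => hz₁ (hh ▸ hb)
    set p : V → Bool := fun x => x == a || x == b with hpdef
    have hpa : p a = true := by simp [hpdef]
    have hpb : p b = true := by simp [hpdef]
    have hp : ∀ x y : V, X.Adj x y → ¬(p x = true ∧ p y = true) := by
      rintro x y hxy ⟨h1, h2⟩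
      simp only [hpdef, Bool.or_eq_true, beq_iff_eq] at h1 h2
      rcases h1 with rfl | rfl <;> rcases h2 with rfl | rfl
      · exact hxy.ne rfl
      · exact hnadj hxy
      · exact hnadj (X.adj_symm hxy)
      · exact hxy.ne rfl
    have hfe := hfilter p hp
    rw [hsplit, hwsplit] at hfe
    simp only [List.filter_append, List.filter_cons, hpa, if_pos] at hfe
    have hguniq : ([] : List V) = z₁.filter p := by
      refine gap_unique (a := a) (x₀ := u.filter p) (x₂ := v.filter p)
        (y₀ := z₀.filter p) (y₂ := z₂.filter p) ?_ ?_ (by simp)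
        (fun hm => hz₁ (List.mem_filter.mp hm).1)
      · simpa using hfe
      · rw [List.count_filter hpa, List.count_filter hpa, hz₀]
    have hbmem : b ∈ z₁.filter p := List.mem_filter.mpr ⟨hb, hpb⟩
    rw [← hguniq] at hbmem
    simp at hbmem
  -- indices
  have hn : w.length = n := List.length_ofFn
  have hlenw : z₀.length + 1 + z₁.length + 1 + z₂.length = n := by
    have hlw := congrArg List.length hwsplit
    simp [List.length_append] at hlw
    omega
  set i₀ := z₀.length with hi₀
  set j₀ := z₀.length + 1 + z₁.length with hj₀
  have hi₀n : i₀ < n := by omega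
  have hj₀n : j₀ < n := by omega
  have hgetw : ∀ (m : ℕ) (hm : m < n), s ⟨m, hm⟩ = w[m]'(by omega) := by
    intro m hm
    simp [hwdef]
  have hsi : s ⟨i₀, hi₀n⟩ = a := by
    rw [hgetw i₀ hi₀n, List.getElem_of_eq hwsplit,
      List.getElem_append_left (by simp; omega : (i₀ : ℕ) < (z₀ ++ a :: z₁).length)]
    exact getElem_append_mid z₀ z₁ a _
  have hlen' : j₀ = (z₀ ++ a :: z₁).length := by simp; omega
  have hsj : s ⟨j₀, hj₀n⟩ = a := by
    rw [hgetw j₀ hj₀n, List.getElem_of_eq hwsplit, getElem_idx_congr hlen']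
    exact getElem_append_mid _ _ a _
  have hsk : ∀ (k : ℕ) (hk : k < n), i₀ < k → k < j₀ → s ⟨k, hk⟩ ∈ z₁ := by
    intro k hk hik hkj
    rw [hgetw k hk]
    have hkw : k < w.length := by omega
    have h5 : w[k]'hkw = z₁[k - i₀ - 1]'(by omega) := by
      rw [List.getElem_of_eq hwsplit,
        List.getElem_append_left (by simp; omega : k < (z₀ ++ a :: z₁).length),
        List.getElem_append_right (by omega : z₀.length ≤ k),
        getElem_idx_congr (by omega : k - z₀.length = (k - i₀ - 1) + 1),
        List.getElem_cons_succ]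
    rw [h5]
    exact List.getElem_mem _
  obtain ⟨-, h2⟩ := h
  obtain ⟨k, hik, hkj, hne⟩ := h2 ⟨i₀, hi₀n⟩ ⟨j₀, hj₀n⟩ (by simp [Fin.lt_def]; omega)
    (hsi.trans hsj.symm)
  have hik' : i₀ < k.val := hik
  have hkj' : k.val < j₀ := hkj
  have hmem : s k ∈ z₁ := by
    have : s ⟨k.val, k.isLt⟩ ∈ z₁ := hsk k.val k.isLt hik' hkj'
    simpa using this
  have hadj : X.Adj (s k) a := X.adj_symm (hcommz _ hmem)
  rw [hsi] at hne
  exact hne (raag_adj_comm hadj)
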